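/- If L ⊆ M_{n,ℓ,t} is a t-spread lex set, then its t-spread shadow Shad_t(L) ⊆ M_{n,ℓ+1,t} is also a t-spread lex set. -/

import Mathlib

open Multiset Finset

/-- A monomial in `K[x_1,…,x_n]` is encoded by the multiset of its variable
indices (each index lies in `[1, n]`).  `TSpread n d t u` says that `u` is a
t-spread monomial: its degree is at most `d`, its indices lie in `[1,n]`, and
consecutive indices `j_k ≤ j_{k+1}` of its sorted index list satisfy
`j_{k+1} - j_k ≥ t_k` (here `t 1 = t_1, …, t (d-1) = t_{d-1}`). -/
def TSpread (n d : ℕ) (t : ℕ → ℕ) (u : Multiset ℕ) : Prop :=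
  u.card ≤ d ∧ (∀ i ∈ u, 1 ≤ i ∧ i ≤ n) ∧
    ∀ k : ℕ, k + 1 < u.card →
      (u.sort (· ≤ ·)).getD k 0 + t (k + 1) ≤ (u.sort (· ≤ ·)).getD (k + 1) 0

/-- `Mset n d ℓ t` : the set `M_{n,ℓ,t}` of t-spread monomials of degree `ℓ`. -/
def Mset (n d ℓ : ℕ) (t : ℕ → ℕ) : Set (Multiset ℕ) :=
  {u | TSpread n d t u ∧ u.card = ℓ}

/-- the t-spread shadow `Shad_t(L) = {x_i w : w ∈ L, x_i w t-spread, i = 1..n}`. -/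
def Shad (n d : ℕ) (t : ℕ → ℕ) (L : Set (Multiset ℕ)) : Set (Multiset ℕ) :=
  {v | ∃ w ∈ L, ∃ i, 1 ≤ i ∧ i ≤ n ∧ v = i ::ₘ w ∧ TSpread n d t v}

/-- largest variable index dividing `u` (0 for the constant monomial). -/
def maxVar (u : Multiset ℕ) : ℕ := (u.sort (· ≤ ·)).getLastD 0

/-- `lexGE u v` : `u ≥_lex v` for monomials of equal degree, where the
lexicographic order is induced by `x_1 > x_2 > ⋯ > x_n`. -/
def lexGE (u v : Multiset ℕ) : Prop :=
  u = v ∨ List.Lex (· < ·) (u.sort (· ≤ ·)) (v.sort (· ≤ ·))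

/-- `L` is a t-spread strongly stable set. -/
def StronglyStableSet (n d : ℕ) (t : ℕ → ℕ) (L : Set (Multiset ℕ)) : Prop :=
  ∀ u ∈ L, ∀ i ∈ u, ∀ j : ℕ, 1 ≤ j → j < i →
    TSpread n d t (j ::ₘ u.erase i) → (j ::ₘ u.erase i) ∈ L

/-- `L` is a t-spread lex set (inside `M_{n,ℓ,t}`). -/
def LexSet (n d ℓ : ℕ) (t : ℕ → ℕ) (L : Set (Multiset ℕ)) : Prop :=
  ∀ u ∈ L, ∀ v ∈ Mset n d ℓ t, lexGE v u → v ∈ L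

/-- `m_i(L)` : number of monomials of `L` with largest variable index `i`. -/
noncomputable def mEq (i : ℕ) (L : Set (Multiset ℕ)) : ℕ :=
  {u ∈ L | maxVar u = i}.ncard

/-- `m_{≤ i}(L)` : number of monomials of `L` with largest variable index `≤ i`. -/
noncomputable def mLe (i : ℕ) (L : Set (Multiset ℕ)) : ℕ :=
  {u ∈ L | maxVar u ≤ i}.ncard

/-- `I` is (the set of monomials of) a monomial ideal of `K[x_1,…,x_n]`. -/
def MonIdeal (n : ℕ) (I : Set (Multiset ℕ)) : Prop :=
  (∀ u ∈ I, ∀ i ∈ u, 1 ≤ i ∧ i ≤ n) ∧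
    ∀ u ∈ I, ∀ i : ℕ, 1 ≤ i → i ≤ n → (i ::ₘ u) ∈ I

/-- `I` is generated by t-spread monomials. -/
def TSpreadGen (n d : ℕ) (t : ℕ → ℕ) (I : Set (Multiset ℕ)) : Prop :=
  ∀ u ∈ I, ∃ v ∈ I, TSpread n d t v ∧ v ≤ u

/-- The t-spread operator `a ↦ a^{(n,ℓ,t)}`:  if `a = Σ_{j=p}^{ℓ} C(a_j, j)` is
the Macaulay expansion of `a` with respect to `ℓ`, then
`tOp t_ℓ ℓ a = Σ_{j=p+1}^{ℓ+1} C(a_{j-1} + 1 - t_ℓ, j)`, computed greedily. -/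
noncomputable def tOp (s : ℕ) : ℕ → ℕ → ℕ
  | 0, _ => 0
  | ℓ + 1, a =>
    if a = 0 then 0
    else
      (sSup {b | Nat.choose b (ℓ + 1) ≤ a} + 1 - s).choose (ℓ + 2) +
        tOp s ℓ (a - Nat.choose (sSup {b | Nat.choose b (ℓ + 1) ≤ a}) (ℓ + 1))

/-- The graded Betti number `β_{i,j}(I)` of a t-spread strongly stable ideal,
via the Eliahou–Kervaire-type formula
`β_{i,i+q}(I) = Σ_{u ∈ G(I)_q} C(max(u) - 1 - Σ_{h=1}^{q-1} t_h, i)`. -/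
noncomputable def betti (t : ℕ → ℕ) (I : Set (Multiset ℕ)) (i j : ℕ) : ℕ :=
  ∑ᶠ u ∈ {u ∈ I | u.card = j - i ∧ ∀ v ∈ I, v ≤ u → v = u},
    (maxVar u - 1 - ∑ h ∈ Finset.Icc 1 (j - i - 1), t h).choose i


/-- eq-or-Lex relation on lists -/
def LexLE (l₁ l₂ : List ℕ) : Prop := l₁ = l₂ ∨ List.Lex (· < ·) l₁ l₂

lemma LexLE.trans' {a b c : List ℕ} (h₁ : LexLE a b) (h₂ : LexLE b c) : LexLE a c := by
  rcases h₁ with rfl | h₁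
  · exact h₂
  rcases h₂ with rfl | h₂
  · exact Or.inr h₁
  · exact Or.inr (List.lex_trans (fun a b => lt_trans a b) h₁ h₂)

lemma sort_unique {u : Multiset ℕ} {l : List ℕ} (hl : l.Pairwise (· ≤ ·)) (he : (l : Multiset ℕ) = u) :
    u.sort (· ≤ ·) = l := by
  refine List.Perm.eq_of_pairwise' (Multiset.pairwise_sort _ _) hl ?_
  rw [← Multiset.coe_eq_coe, Multiset.sort_eq, he]

lemma getLastD_of_ne_nil {l : List ℕ} (h : l ≠ []) : l.getLastD 0 = l.getLast h := by
  cases l with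
  | nil => exact absurd rfl h
  | cons a l => simp [List.getLastD_eq_getLast?, List.getLast?_eq_getLast]

lemma maxVar_mem {u : Multiset ℕ} (hu : u ≠ 0) : maxVar u ∈ u := by
  have hs : u.sort (· ≤ ·) ≠ [] := by
    intro h
    apply hu
    rw [← Multiset.sort_eq u (· ≤ ·), h]; rfl
  rw [← Multiset.mem_sort (α := ℕ) (· ≤ ·)]
  rw [maxVar, getLastD_of_ne_nil hs]
  exact List.getLast_mem hs

lemma sort_erase_max {u : Multiset ℕ} (hu : u ≠ 0) :
    (u.erase (maxVar u)).sort (· ≤ ·) = (u.sort (· ≤ ·)).dropLast := by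
  set s := u.sort (· ≤ ·) with hs
  have hsne : s ≠ [] := by
    intro h
    apply hu
    rw [← Multiset.sort_eq u (· ≤ ·), ← hs, h]; rfl
  have hm : maxVar u = s.getLast hsne := getLastD_of_ne_nil hsne
  refine sort_unique ((Multiset.pairwise_sort (α := ℕ) u (· ≤ ·)).sublist (List.dropLast_sublist s)) ?_
  have hds : (s.dropLast ++ [s.getLast hsne] : Multiset ℕ) = u := by
    rw [List.dropLast_append_getLast hsne]; exact Multiset.sort_eq _ _
  have : u = s.getLast hsne ::ₘ (s.dropLast : Multiset ℕ) := by
    rw [← hds]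
    simp [Multiset.cons_coe]
  rw [hm, this, Multiset.erase_cons_head]

/-- Claim A: dropping the last element of a sorted list is lex-least among erasures. -/
lemma lexA : ∀ (s : List ℕ), s.Pairwise (· ≤ ·) → ∀ i ∈ s, LexLE s.dropLast (s.erase i)
  | [], _, i, hi => absurd hi List.not_mem_nil
  | [a], _, i, hi => by
      have : i = a := by simpa using hi
      subst this
      simp [LexLE]
  | a :: b :: l, hs, i, hi => by
      have hab : a ≤ b := (List.pairwise_cons.mp hs).1 b (by simp)
      have hs' : (b :: l).Pairwise (· ≤ ·) := (List.pairwise_cons.mp hs).2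
      by_cases hia : i = a
      · subst hia
        rw [List.erase_cons_head, List.dropLast_cons₂]
        rcases lt_or_eq_of_le hab with h | h
        · exact Or.inr (List.Lex.rel h)
        · subst h
          have := lexA (i :: l) hs' i (by simp)
          rw [List.erase_cons_head] at this
          rcases this with h | h
          · exact Or.inl (by rw [h])
          · exact Or.inr (List.Lex.cons h)
      · have hib : i ∈ b :: l := by
          rcases List.mem_cons.mp hi with h | h
          · exact absurd h hia
          · exact h
        rw [List.erase_cons_tail (by simp [Ne.symm hia]), List.dropLast_cons₂]
        rcases lexA (b :: l) hs' i hib with h | h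
        · exact Or.inl (by rw [h])
        · exact Or.inr (List.Lex.cons h)

/-- Claim B: dropLast is monotone w.r.t. Lex on equal-length lists. -/
lemma lexB : ∀ (r s : List ℕ), r.length = s.length → List.Lex (· < ·) r s →
    LexLE r.dropLast s.dropLast
  | [], s, hlen, hlex => by
      have : s = [] := by simpa using hlen.symm
      subst this; cases hlex
  | a :: l₁, [], hlen, hlex => by cases hlex
  | a :: l₁, b :: l₂, hlen, hlex => by
      have hlen' : l₁.length = l₂.length := by simpa using hlen
      cases l₁ with
      | nil =>
        have : l₂ = [] := by simpa using hlen'.symm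
        subst this
        exact Or.inl (by simp)
      | cons c l₁' =>
        cases l₂ with
        | nil => simp at hlen'
        | cons d l₂' =>
          rw [List.dropLast_cons₂, List.dropLast_cons₂]
          cases hlex with
          | rel h => exact Or.inr (List.Lex.rel h)
          | cons h =>
            rcases lexB (c :: l₁') (d :: l₂') hlen' h with h' | h'
            · exact Or.inl (by rw [h'])
            · exact Or.inr (List.Lex.cons h')

lemma tspread_erase_max {n d : ℕ} {t : ℕ → ℕ} {v : Multiset ℕ} (hv : TSpread n d t v)
    (hne : v ≠ 0) : TSpread n d t (v.erase (maxVar v)) := by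
  obtain ⟨hc, hmem, hgap⟩ := hv
  have hmm := maxVar_mem hne
  refine ⟨?_, fun i hi => hmem i (Multiset.mem_of_mem_erase hi), ?_⟩
  · rw [Multiset.card_erase_of_mem hmm]
    exact le_trans (Nat.pred_le _) hc
  · intro k hk
    rw [Multiset.card_erase_of_mem hmm, Nat.pred_eq_sub_one] at hk
    rw [sort_erase_max hne]
    have hlen : (v.sort (· ≤ ·)).dropLast.length = Multiset.card v - 1 := by
      rw [List.length_dropLast, Multiset.length_sort]
    have hk1 : k + 1 < (v.sort (· ≤ ·)).dropLast.length := by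
      rw [hlen]; omega
    have hk0 : k < (v.sort (· ≤ ·)).dropLast.length := by omega
    have hkv : k + 1 < Multiset.card v := by omega
    rw [List.getD_eq_getElem _ _ hk1, List.getD_eq_getElem _ _ hk0,
      List.getElem_dropLast, List.getElem_dropLast]
    have := hgap k hkv
    rwa [List.getD_eq_getElem _ _ (by rw [Multiset.length_sort]; omega),
      List.getD_eq_getElem _ _ (by rw [Multiset.length_sort]; omega)] at this

/-- the t-spread shadow of a t-spread lex set `L ⊆ M_{n,ℓ,t}`
is a t-spread lex subset of `M_{n,ℓ+1,t}`. -/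
theorem stmt3 (n d ℓ : ℕ) (t : ℕ → ℕ) (hd : 2 ≤ d) (hℓ : ℓ ≤ d)
    (L : Set (Multiset ℕ)) (hLM : L ⊆ Mset n d ℓ t)
    (hlex : LexSet n d ℓ t L) :
    Shad n d t L ⊆ Mset n d (ℓ + 1) t ∧
      LexSet n d (ℓ + 1) t (Shad n d t L) := by
  have hShadM : Shad n d t L ⊆ Mset n d (ℓ + 1) t := by
    rintro v ⟨w, hw, i, hi1, hin, rfl, hts⟩
    refine ⟨hts, ?_⟩
    rw [Multiset.card_cons, (hLM hw).2]
  refine ⟨hShadM, ?_⟩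
  rintro u ⟨w, hw, i, hi1, hin, rfl, htu⟩ v hv hge
  obtain ⟨htv, hcv⟩ := hv
  rcases hge with rfl | hlx
  · exact ⟨w, hw, i, hi1, hin, rfl, htu⟩
  · set m := maxVar v with hm
    have hvne : v ≠ 0 := by
      intro h; rw [h] at hcv; simp at hcv
    have hmm : m ∈ v := maxVar_mem hvne
    have hm1 : 1 ≤ m := (htv.2.1 m hmm).1
    have hmn : m ≤ n := (htv.2.1 m hmm).2
    have htv' : TSpread n d t (v.erase m) := tspread_erase_max htv hvne
    have hcv' : Multiset.card (v.erase m) = ℓ := by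
      rw [Multiset.card_erase_of_mem hmm, hcv]; rfl
    have hcw : Multiset.card w = ℓ := (hLM hw).2
    have hlen : (v.sort (· ≤ ·)).length = ((i ::ₘ w).sort (· ≤ ·)).length := by
      rw [Multiset.length_sort, Multiset.length_sort, hcv, Multiset.card_cons, hcw]
    have h1 : LexLE (v.sort (· ≤ ·)).dropLast ((i ::ₘ w).sort (· ≤ ·)).dropLast :=
      lexB _ _ hlen hlx
    have hiu : i ∈ (i ::ₘ w).sort (· ≤ ·) := by
      rw [Multiset.mem_sort]; exact Multiset.mem_cons_self i w
    have h2 : LexLE ((i ::ₘ w).sort (· ≤ ·)).dropLast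
        (((i ::ₘ w).sort (· ≤ ·)).erase i) :=
      lexA _ (Multiset.pairwise_sort _ _) i hiu
    have h3 : w.sort (· ≤ ·) = ((i ::ₘ w).sort (· ≤ ·)).erase i := by
      refine sort_unique ((Multiset.pairwise_sort (i ::ₘ w) (· ≤ ·)).sublist
        List.erase_sublist) ?_
      rw [← Multiset.coe_erase, Multiset.sort_eq, Multiset.erase_cons_head]
    have h4 : (v.erase m).sort (· ≤ ·) = (v.sort (· ≤ ·)).dropLast := sort_erase_max hvne
    have h5 : LexLE ((v.erase m).sort (· ≤ ·)) (w.sort (· ≤ ·)) := by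
      rw [h4, h3]
      exact LexLE.trans' h1 h2
    have hge' : lexGE (v.erase m) w := by
      rcases h5 with h | h
      · left
        rw [← Multiset.sort_eq (α := ℕ) (v.erase m) (· ≤ ·),
          ← Multiset.sort_eq (α := ℕ) w (· ≤ ·), h]
      · exact Or.inr h
    have hvL : v.erase m ∈ L := hlex w hw (v.erase m) ⟨htv', hcv'⟩ hge'
    exact ⟨v.erase m, hvL, m, hm1, hmn, (Multiset.cons_erase hmm).symm, htv⟩
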